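/- arXiv:1712.03234 — 2 statements merged into one kernel-verified Lean document; each statement's English description precedes it below -/
import Mathlib

section
/- Let Λ be a locally convex row-finite k-graph. If Λ is cofinal, then Λ^0 is a maximal tail in Λ. -/
/-!
Common definitions: higher-rank graphs (`k`-graphs), boundary paths, the
equivalence relation `∼_Λ`, the periodicity group `Per(Λ)`, maximal tails,
hereditary/saturated sets, and (an axiomatization of) the Farthing
desourcification `Λ̄` of a locally convex row-finite `k`-graph `Λ`.
-/

/-- A `k`-graph: a countable small category `Λ` equipped with a degree functor
`d : Λ → ℕ^k` satisfying the factorization property.  Elements of `Path` are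
the morphisms ("paths"); the vertices are the identity morphisms (the paths `v`
with `r v = v`, equivalently of degree `0`).  The composition `comp μ ν` is
only meaningful when `s μ = r ν`. -/
structure KGraph (k : ℕ) where
  Path : Type
  countable_path : Countable Path
  nonempty_path : Nonempty Path
  r : Path → Path
  s : Path → Path
  d : Path → Fin k → ℕ
  comp : Path → Path → Path
  d_r : ∀ μ, d (r μ) = 0
  d_s : ∀ μ, d (s μ) = 0
  r_r : ∀ μ, r (r μ) = r μ
  s_r : ∀ μ, s (r μ) = r μ
  r_s : ∀ μ, r (s μ) = s μ
  s_s : ∀ μ, s (s μ) = s μ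
  comp_id : ∀ μ, comp μ (s μ) = μ
  id_comp : ∀ μ, comp (r μ) μ = μ
  r_comp : ∀ μ ν, s μ = r ν → r (comp μ ν) = r μ
  s_comp : ∀ μ ν, s μ = r ν → s (comp μ ν) = s ν
  d_comp : ∀ μ ν, s μ = r ν → d (comp μ ν) = d μ + d ν
  comp_assoc : ∀ μ ν ρ, s μ = r ν → s ν = r ρ →
    comp (comp μ ν) ρ = comp μ (comp ν ρ)
  factorization : ∀ (lam : Path) (m n : Fin k → ℕ), d lam = m + n →
    ∃! p : Path × Path, d p.1 = m ∧ d p.2 = n ∧ s p.1 = r p.2 ∧ lam = comp p.1 p.2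

namespace KGraph

variable {k : ℕ}

/-- The vertices of a `k`-graph are its identity morphisms. -/
def IsVertex (Λ : KGraph k) (v : Λ.Path) : Prop := Λ.r v = v

/-- `Λ.boundedPaths n` is the set `Λ^{≤ n}`: paths `λ` with `d λ ≤ n` such that
`d(λ)_i < n_i` implies `s(λ)Λ^{e_i} = ∅`. -/
def boundedPaths (Λ : KGraph k) (n : Fin k → ℕ) : Set Λ.Path :=
  {lam | Λ.d lam ≤ n ∧ ∀ i : Fin k, Λ.d lam i < n i →
    ∀ e, Λ.r e = Λ.s lam → Λ.d e ≠ Pi.single i 1}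

/-- `Λ` is row-finite if every `vΛ^n` is finite. -/
def RowFinite (Λ : KGraph k) : Prop :=
  ∀ (v : Λ.Path) (n : Fin k → ℕ), Λ.IsVertex v →
    {lam | Λ.r lam = v ∧ Λ.d lam = n}.Finite

/-- `Λ` is locally convex if for `i ≠ j`, `λ ∈ vΛ^{e_i}` and `μ ∈ vΛ^{e_j}`
one has `s(λ)Λ^{e_j} ≠ ∅` (by symmetry in `i, j` this also gives
`s(μ)Λ^{e_i} ≠ ∅`). -/
def LocallyConvex (Λ : KGraph k) : Prop :=
  ∀ i j : Fin k, i ≠ j → ∀ lam mu : Λ.Path, Λ.r lam = Λ.r mu →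
    Λ.d lam = Pi.single i 1 → Λ.d mu = Pi.single j 1 →
    ∃ lam', Λ.r lam' = Λ.s lam ∧ Λ.d lam' = Pi.single j 1

end KGraph

/-- A boundary path of `Λ`: a degree-preserving functor `x : Ω_{k,m} → Λ`
(`m = deg ∈ (ℕ ∪ {∞})^k`) such that `p ≤ m` and `p_i = m_i` imply
`x(p)Λ^{e_i} = ∅`.  `seg p q` is the path `x(p,q)`, meaningful for
`p ≤ q ≤ deg`; `seg p p` is the vertex `x(p)`. -/
structure BoundaryPath {k : ℕ} (Λ : KGraph k) where
  deg : Fin k → ℕ∞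
  seg : (Fin k → ℕ) → (Fin k → ℕ) → Λ.Path
  seg_d : ∀ p q : Fin k → ℕ, p ≤ q → (∀ i, (q i : ℕ∞) ≤ deg i) →
    Λ.d (seg p q) = q - p
  seg_r : ∀ p q : Fin k → ℕ, p ≤ q → (∀ i, (q i : ℕ∞) ≤ deg i) →
    Λ.r (seg p q) = seg p p
  seg_s : ∀ p q : Fin k → ℕ, p ≤ q → (∀ i, (q i : ℕ∞) ≤ deg i) →
    Λ.s (seg p q) = seg q q
  seg_comp : ∀ p q t : Fin k → ℕ, p ≤ q → q ≤ t → (∀ i, (t i : ℕ∞) ≤ deg i) →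
    Λ.comp (seg p q) (seg q t) = seg p t
  boundary : ∀ p : Fin k → ℕ, (∀ i, (p i : ℕ∞) ≤ deg i) →
    ∀ i : Fin k, (p i : ℕ∞) = deg i →
      ∀ e, Λ.r e = seg p p → Λ.d e ≠ Pi.single i 1

/-- `emin m e` is the coordinatewise minimum `m ∧ e` of `m ∈ ℕ^k` with the
(possibly infinite) degree `e ∈ (ℕ ∪ {∞})^k`, as an element of `ℕ^k`. -/
noncomputable def emin {k : ℕ} (m : Fin k → ℕ) (e : Fin k → ℕ∞) : Fin k → ℕ :=
  fun i => (min ((m i : ℕ∞)) (e i)).toNat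

/-- Equality of boundary paths (of the same degree), as functors. -/
def BPEq {k : ℕ} {Λ : KGraph k} (x y : BoundaryPath Λ) : Prop :=
  x.deg = y.deg ∧ ∀ p q : Fin k → ℕ, p ≤ q → (∀ i, (q i : ℕ∞) ≤ x.deg i) →
    x.seg p q = y.seg p q

/-- `IsExtension Λ lam x y` says that `y = lam · x` is the (unique) boundary
path with `y(0, d lam) = lam` and `y(d lam, d lam + p) = x(0, p)`. -/
def IsExtension {k : ℕ} (Λ : KGraph k) (lam : Λ.Path) (x y : BoundaryPath Λ) :
    Prop :=
  (∀ i, y.deg i = (Λ.d lam i : ℕ∞) + x.deg i) ∧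
  y.seg 0 (Λ.d lam) = lam ∧
  ∀ p : Fin k → ℕ, (∀ i, (p i : ℕ∞) ≤ x.deg i) →
    y.seg (Λ.d lam) (Λ.d lam + p) = x.seg 0 p

/-- The relation `μ ∼_Λ ν`: `s μ = s ν` and `μx = νx` for every boundary path
`x ∈ s(μ)Λ^{≤∞}`. -/
def KGraph.peq {k : ℕ} (Λ : KGraph k) (μ ν : Λ.Path) : Prop :=
  Λ.s μ = Λ.s ν ∧ ∀ x y z : BoundaryPath Λ, x.seg 0 0 = Λ.s μ →
    IsExtension Λ μ x y → IsExtension Λ ν x z → BPEq y z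

/-- `Per(Λ) = {d μ - d ν : μ ∼_Λ ν} ⊆ ℤ^k`. -/
def KGraph.Per {k : ℕ} (Λ : KGraph k) : Set (Fin k → ℤ) :=
  {g | ∃ μ ν : Λ.Path, Λ.peq μ ν ∧ g = fun i => (Λ.d μ i : ℤ) - (Λ.d ν i : ℤ)}

/-- `Λ` is aperiodic if for every vertex `v` there is a boundary path
`x ∈ vΛ^{≤∞}` such that distinct `μ, ν ∈ Λv` have `μx ≠ νx`. -/
def KGraph.Aperiodic {k : ℕ} (Λ : KGraph k) : Prop :=
  ∀ v : Λ.Path, Λ.IsVertex v → ∃ x : BoundaryPath Λ, x.seg 0 0 = v ∧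
    ∀ μ ν : Λ.Path, Λ.s μ = v → Λ.s ν = v → μ ≠ ν →
      ∀ y z : BoundaryPath Λ, IsExtension Λ μ x y → IsExtension Λ ν x z →
        ¬ BPEq y z

/-- A maximal tail: a nonempty set `T` of vertices such that (1) `s λ ∈ T`
implies `r λ ∈ T`; (2) for `v ∈ T` and `n ∈ ℕ^k` there is `λ ∈ vΛ^{≤n}` with
`s λ ∈ T`; (3) any `v, w ∈ T` are connected via `μ ∈ vΛ`, `ν ∈ wΛ` with
`s μ = s ν`. -/
def KGraph.IsMaximalTail {k : ℕ} (Λ : KGraph k) (T : Set Λ.Path) : Prop :=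
  T.Nonempty ∧ (∀ v ∈ T, Λ.IsVertex v) ∧
  (∀ lam : Λ.Path, Λ.s lam ∈ T → Λ.r lam ∈ T) ∧
  (∀ v ∈ T, ∀ n : Fin k → ℕ,
    ∃ lam ∈ Λ.boundedPaths n, Λ.r lam = v ∧ Λ.s lam ∈ T) ∧
  (∀ v ∈ T, ∀ w ∈ T, ∃ μ ν : Λ.Path, Λ.r μ = v ∧ Λ.r ν = w ∧ Λ.s μ = Λ.s ν)

/-- `H_{Per(Λ)}`: the set of vertices `v` such that for all `μ ∈ vΛ` and
`m ∈ ℕ^k` with `d μ - m ∈ Per(Λ)` there exists `ν ∈ vΛ^m` with `μ ∼_Λ ν`. -/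
def KGraph.HPer {k : ℕ} (Λ : KGraph k) : Set Λ.Path :=
  {v | Λ.IsVertex v ∧ ∀ μ : Λ.Path, Λ.r μ = v → ∀ m : Fin k → ℕ,
    (fun i => (Λ.d μ i : ℤ) - (m i : ℤ)) ∈ Λ.Per →
    ∃ ν : Λ.Path, Λ.r ν = v ∧ Λ.d ν = m ∧ Λ.peq μ ν}

/-- A set of vertices `H` is hereditary if `r λ ∈ H` implies `s λ ∈ H`. -/
def KGraph.Hereditary {k : ℕ} (Λ : KGraph k) (H : Set Λ.Path) : Prop :=
  ∀ lam : Λ.Path, Λ.r lam ∈ H → Λ.s lam ∈ H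

/-- A set of vertices `H` is saturated if `s(vΛ^{≤n}) ⊆ H` for some `n ∈ ℕ^k`
implies `v ∈ H`. -/
def KGraph.Saturated {k : ℕ} (Λ : KGraph k) (H : Set Λ.Path) : Prop :=
  ∀ v : Λ.Path, Λ.IsVertex v →
    (∃ n : Fin k → ℕ, ∀ lam ∈ Λ.boundedPaths n, Λ.r lam = v → Λ.s lam ∈ H) →
    v ∈ H

/-- `Σ(H)`: the smallest saturated set containing `H`. -/
def KGraph.SatClosure {k : ℕ} (Λ : KGraph k) (H : Set Λ.Path) : Set Λ.Path :=
  ⋂₀ {S : Set Λ.Path | H ⊆ S ∧ Λ.Saturated S}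

/-- A boundary path `x` is cofinal if every vertex `v` admits `n ≤ d x` with
`vΛx(n) ≠ ∅`. -/
def KGraph.CofinalBP {k : ℕ} (Λ : KGraph k) (x : BoundaryPath Λ) : Prop :=
  ∀ v : Λ.Path, Λ.IsVertex v → ∃ n : Fin k → ℕ,
    (∀ i, (n i : ℕ∞) ≤ x.deg i) ∧ ∃ μ : Λ.Path, Λ.r μ = v ∧ Λ.s μ = x.seg n n

/-- `Λ` is cofinal if all of its boundary paths are cofinal. -/
def KGraph.Cofinal {k : ℕ} (Λ : KGraph k) : Prop :=
  ∀ x : BoundaryPath Λ, Λ.CofinalBP x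

/-- `T(v) = {s μ : μ ∈ vΛ}`, the smallest hereditary set containing `v`. -/
def KGraph.tree {k : ℕ} (Λ : KGraph k) (v : Λ.Path) : Set Λ.Path :=
  {w | ∃ μ : Λ.Path, Λ.r μ = v ∧ Λ.s μ = w}

/-- `Δ(H₁,H₂) = {v ∈ H₁ : T(v) ∩ H₂ = ∅}`. -/
def KGraph.Delta {k : ℕ} (Λ : KGraph k) (H₁ H₂ : Set Λ.Path) : Set Λ.Path :=
  {v ∈ H₁ | Λ.tree v ∩ H₂ = ∅}

/-- `Ω(H₁,H₂) = {v ∈ H₁ \ H₂ : T(v) ∩ H₂ ≠ ∅}`. -/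
def KGraph.Omega {k : ℕ} (Λ : KGraph k) (H₁ H₂ : Set Λ.Path) : Set Λ.Path :=
  {v ∈ H₁ \ H₂ | (Λ.tree v ∩ H₂).Nonempty}

/-- The relation `H₁ ≻ H₂`. -/
def KGraph.Succ {k : ℕ} (Λ : KGraph k) (H₁ H₂ : Set Λ.Path) : Prop :=
  H₂ ⊆ H₁ ∧ (Λ.Delta H₁ H₂).Nonempty ∧
  ∀ v ∈ Λ.Omega H₁ H₂, ∃ n : Fin k → ℕ,
    ∀ lam ∈ Λ.boundedPaths n, Λ.r lam = v → Λ.s lam ∈ H₂ ∪ Λ.Delta H₁ H₂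

/-- `IsGlue Λ x n y p z` says that `z` is the boundary path
`x(0, n ∧ d x) · σ^{p ∧ d y}(y)`. -/
def IsGlue {k : ℕ} (Λ : KGraph k) (x : BoundaryPath Λ) (n : Fin k → ℕ)
    (y : BoundaryPath Λ) (p : Fin k → ℕ) (z : BoundaryPath Λ) : Prop :=
  (∀ i, z.deg i = (emin n x.deg i : ℕ∞) + (y.deg i - (emin p y.deg i : ℕ∞))) ∧
  z.seg 0 (emin n x.deg) = x.seg 0 (emin n x.deg) ∧
  ∀ t : Fin k → ℕ, (∀ i, ((emin p y.deg i + t i : ℕ) : ℕ∞) ≤ y.deg i) →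
    z.seg (emin n x.deg) (emin n x.deg + t) =
      y.seg (emin p y.deg) (emin p y.deg + t)

/-- The Farthing desourcification `Λ̄ = P_Λ/≈` of `Λ`: a `k`-graph `bar`
without sources whose morphisms are the classes `cls x m n = [x;(m,n)]`
(`x ∈ Λ^{≤∞}`, `m ≤ n ∈ ℕ^k`), where `[x;(m,n)] = [y;(p,q)]` iff
(P1) `x(m ∧ d x, n ∧ d x) = y(p ∧ d y, q ∧ d y)`,
(P2) `m - m ∧ d x = p - p ∧ d y` and (P3) `n - m = q - p`; together with the
range, source, degree and composition formulas, the canonical embedding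
`emb : Λ → Λ̄` (`λ ↦ [λx;(0, d λ)]`) and the projection `proj = π : Λ̄ → Λ`,
`π [x;(m,n)] = [x;(m ∧ d x, n ∧ d x)]`. -/
structure Desourcification {k : ℕ} (Λ : KGraph k) where
  bar : KGraph k
  noSources : ∀ v : bar.Path, bar.IsVertex v → ∀ i : Fin k,
    ∃ e, bar.r e = v ∧ bar.d e = Pi.single i 1
  cls : BoundaryPath Λ → (Fin k → ℕ) → (Fin k → ℕ) → bar.Path
  cls_surjective : ∀ μ : bar.Path,
    ∃ (x : BoundaryPath Λ) (m : Fin k → ℕ), μ = cls x m (m + bar.d μ)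
  cls_eq_iff : ∀ (x : BoundaryPath Λ) (m n : Fin k → ℕ) (y : BoundaryPath Λ)
    (p q : Fin k → ℕ), m ≤ n → p ≤ q →
    (cls x m n = cls y p q ↔
      (x.seg (emin m x.deg) (emin n x.deg) =
          y.seg (emin p y.deg) (emin q y.deg) ∧
        m - emin m x.deg = p - emin p y.deg ∧
        n - m = q - p))
  d_cls : ∀ (x : BoundaryPath Λ) (m n : Fin k → ℕ), m ≤ n →
    bar.d (cls x m n) = n - m
  r_cls : ∀ (x : BoundaryPath Λ) (m n : Fin k → ℕ), m ≤ n →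
    bar.r (cls x m n) = cls x m m
  s_cls : ∀ (x : BoundaryPath Λ) (m n : Fin k → ℕ), m ≤ n →
    bar.s (cls x m n) = cls x n n
  comp_cls : ∀ (x y : BoundaryPath Λ) (m n p q : Fin k → ℕ), m ≤ n → p ≤ q →
    bar.s (cls x m n) = bar.r (cls y p q) →
    ∀ z : BoundaryPath Λ, IsGlue Λ x n y p z →
      bar.comp (cls x m n) (cls y p q) = cls z m (n + (q - p))
  emb : Λ.Path → bar.Path
  emb_injective : Function.Injective emb
  emb_r : ∀ lam : Λ.Path, emb (Λ.r lam) = bar.r (emb lam)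
  emb_s : ∀ lam : Λ.Path, emb (Λ.s lam) = bar.s (emb lam)
  emb_d : ∀ lam : Λ.Path, bar.d (emb lam) = Λ.d lam
  emb_comp : ∀ μ ν : Λ.Path, Λ.s μ = Λ.r ν →
    emb (Λ.comp μ ν) = bar.comp (emb μ) (emb ν)
  emb_cls : ∀ (lam : Λ.Path) (x y : BoundaryPath Λ), x.seg 0 0 = Λ.s lam →
    IsExtension Λ lam x y → emb lam = cls y 0 (Λ.d lam)
  proj : bar.Path → Λ.Path
  proj_cls : ∀ (x : BoundaryPath Λ) (m n : Fin k → ℕ), m ≤ n →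
    proj (cls x m n) = x.seg (emin m x.deg) (emin n x.deg)

/-- `IsInfClass D x p z` says that `z` is the infinite path `[x;(p,∞)]` of
`Λ̄`, i.e. `z(m,n) = [x;(p+m, p+n)]`. -/
def IsInfClass {k : ℕ} {Λ : KGraph k} (D : Desourcification Λ)
    (x : BoundaryPath Λ) (p : Fin k → ℕ) (z : BoundaryPath D.bar) : Prop :=
  (∀ i, z.deg i = (⊤ : ℕ∞)) ∧
  ∀ m n : Fin k → ℕ, m ≤ n → z.seg m n = D.cls x (p + m) (p + n)

/-- `IsShift x n y` says that `y = σ^n(x)` is the `n`-shifted boundary path,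
`σ^n(x)(p,q) = x(p+n, q+n)`, of degree `d x - n`. -/
def IsShift {k : ℕ} {Λ : KGraph k} (x : BoundaryPath Λ) (n : Fin k → ℕ)
    (y : BoundaryPath Λ) : Prop :=
  (∀ i, y.deg i = x.deg i - (n i : ℕ∞)) ∧
  ∀ p q : Fin k → ℕ, p ≤ q → (∀ i, (q i : ℕ∞) ≤ y.deg i) →
    y.seg p q = x.seg (p + n) (q + n)

/-! ### Auxiliary machinery for `statement13` -/

namespace KGraph

variable {k : ℕ}

/-- Degree-zero paths are vertices. -/
lemma eq_r_of_d_eq_zero (Λ : KGraph k) {lam : Λ.Path} (h : Λ.d lam = 0) :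
    Λ.r lam = lam := by
  have hfac := Λ.factorization lam 0 0 (by simpa using h)
  have h1 := hfac.unique
    (y₁ := ((Λ.r lam, lam) : Λ.Path × Λ.Path))
    (y₂ := ((lam, Λ.s lam) : Λ.Path × Λ.Path))
    ⟨Λ.d_r lam, h, Λ.s_r lam, (Λ.id_comp lam).symm⟩
    ⟨h, Λ.d_s lam, (Λ.r_s lam).symm, (Λ.comp_id lam).symm⟩
  exact congrArg Prod.fst h1

lemma s_eq_of_d_eq_zero (Λ : KGraph k) {lam : Λ.Path} (h : Λ.d lam = 0) :
    Λ.s lam = lam := by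
  rw [← Λ.eq_r_of_d_eq_zero h, Λ.s_r, Λ.eq_r_of_d_eq_zero h]

private lemma d_sub_aux {k : ℕ} {m n : Fin k → ℕ} (h : m ≤ n) :
    n = m + (n - m) := by
  funext i
  have h2 : m i ≤ n i := h i
  simp only [Pi.add_apply, Pi.sub_apply]
  omega

open Classical in
/-- The unique factorization of `lam` as `αβ` with `d α = m` (for `m ≤ d lam`). -/
noncomputable def split (Λ : KGraph k) (lam : Λ.Path) (m : Fin k → ℕ) :
    Λ.Path × Λ.Path :=
  if h : m ≤ Λ.d lam then
    (Λ.factorization lam m (Λ.d lam - m) (d_sub_aux h)).exists.choose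
  else (lam, lam)

lemma split_spec (Λ : KGraph k) (lam : Λ.Path) {m : Fin k → ℕ}
    (h : m ≤ Λ.d lam) :
    Λ.d (Λ.split lam m).1 = m ∧ Λ.d (Λ.split lam m).2 = Λ.d lam - m ∧
      Λ.s (Λ.split lam m).1 = Λ.r (Λ.split lam m).2 ∧
      lam = Λ.comp (Λ.split lam m).1 (Λ.split lam m).2 := by
  classical rw [split, dif_pos h]
  exact (Λ.factorization lam m (Λ.d lam - m) (d_sub_aux h)).exists.choose_spec

lemma split_eq (Λ : KGraph k) {lam α β : Λ.Path} {m : Fin k → ℕ}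
    (h : m ≤ Λ.d lam) (hd : Λ.d α = m) (hs : Λ.s α = Λ.r β)
    (hc : lam = Λ.comp α β) : Λ.split lam m = (α, β) := by
  have hdβ : Λ.d β = Λ.d lam - m := by
    have hd2 : Λ.d lam = Λ.d α + Λ.d β := by rw [hc]; exact Λ.d_comp α β hs
    funext i
    have h1 := congrFun hd2 i
    have h2 := congrFun hd i
    have h3 : m i ≤ Λ.d lam i := h i
    simp only [Pi.add_apply, Pi.sub_apply] at *
    omega
  obtain ⟨s1, s2, s3, s4⟩ := Λ.split_spec lam h
  exact (Λ.factorization lam m (Λ.d lam - m) (d_sub_aux h)).unique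
    ⟨s1, s2, s3, s4⟩ ⟨hd, hdβ, hs, hc⟩

lemma split_r (Λ : KGraph k) (lam : Λ.Path) {m : Fin k → ℕ}
    (h : m ≤ Λ.d lam) : Λ.r (Λ.split lam m).1 = Λ.r lam := by
  obtain ⟨s1, s2, s3, s4⟩ := Λ.split_spec lam h
  conv_rhs => rw [s4]
  rw [Λ.r_comp _ _ s3]

lemma split_s (Λ : KGraph k) (lam : Λ.Path) {m : Fin k → ℕ}
    (h : m ≤ Λ.d lam) : Λ.s (Λ.split lam m).2 = Λ.s lam := by
  obtain ⟨s1, s2, s3, s4⟩ := Λ.split_spec lam h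
  conv_rhs => rw [s4]
  rw [Λ.s_comp _ _ s3]

/-- The segment `lam(p, q)` of a path. -/
noncomputable def mid (Λ : KGraph k) (lam : Λ.Path) (p q : Fin k → ℕ) :
    Λ.Path :=
  (Λ.split (Λ.split lam p).2 (q - p)).1

section mid

variable (Λ : KGraph k) {lam : Λ.Path} {p q t : Fin k → ℕ}

private lemma mid_le₁ (hpq : p ≤ q) (hq : q ≤ Λ.d lam) : p ≤ Λ.d lam :=
  le_trans hpq hq

private lemma mid_le₂ (hpq : p ≤ q) (hq : q ≤ Λ.d lam) :
    q - p ≤ Λ.d (Λ.split lam p).2 := by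
  rw [(Λ.split_spec lam (mid_le₁ Λ hpq hq)).2.1]
  intro i
  show (q - p) i ≤ (Λ.d lam - p) i
  simp only [Pi.sub_apply]
  have h1 : q i ≤ Λ.d lam i := hq i
  omega

lemma mid_d (hpq : p ≤ q) (hq : q ≤ Λ.d lam) :
    Λ.d (Λ.mid lam p q) = q - p :=
  (Λ.split_spec _ (mid_le₂ Λ hpq hq)).1

lemma mid_refl (hq : p ≤ Λ.d lam) :
    Λ.mid lam p p = Λ.s (Λ.split lam p).1 := by
  have h0 : Λ.d (Λ.mid lam p p) = 0 := by
    rw [mid_d Λ (le_refl p) hq]; simp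
  rw [← Λ.eq_r_of_d_eq_zero h0, mid,
    Λ.split_r _ (mid_le₂ Λ (le_refl p) hq), (Λ.split_spec lam hq).2.2.1]

lemma mid_r (hpq : p ≤ q) (hq : q ≤ Λ.d lam) :
    Λ.r (Λ.mid lam p q) = Λ.mid lam p p := by
  rw [mid, Λ.split_r _ (mid_le₂ Λ hpq hq), mid_refl Λ (mid_le₁ Λ hpq hq),
    (Λ.split_spec lam (mid_le₁ Λ hpq hq)).2.2.1]

/-- `split lam q` in terms of `split lam p` for `p ≤ q`. -/
lemma split_split (hpq : p ≤ q) (hq : q ≤ Λ.d lam) :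
    Λ.split lam q = (Λ.comp (Λ.split lam p).1 (Λ.mid lam p q),
      (Λ.split (Λ.split lam p).2 (q - p)).2) := by
  have hp := mid_le₁ Λ hpq hq
  obtain ⟨a1, a2, a3, a4⟩ := Λ.split_spec lam hp
  obtain ⟨b1, b2, b3, b4⟩ := Λ.split_spec (Λ.split lam p).2 (mid_le₂ Λ hpq hq)
  have hsg : Λ.s (Λ.split lam p).1 = Λ.r (Λ.mid lam p q) := by
    rw [mid, Λ.split_r _ (mid_le₂ Λ hpq hq)]; exact a3
  have hsg2 : Λ.s (Λ.mid lam p q) =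
      Λ.r (Λ.split (Λ.split lam p).2 (q - p)).2 := by
    rw [mid]; exact b3
  refine Λ.split_eq hq ?_ ?_ ?_
  · rw [Λ.d_comp _ _ hsg, a1, mid, b1]
    funext i; simp only [Pi.add_apply, Pi.sub_apply]
    have h1 : p i ≤ q i := hpq i; omega
  · rw [Λ.s_comp _ _ hsg]; exact hsg2
  · rw [Λ.comp_assoc _ _ _ hsg hsg2, mid, ← b4, ← a4]

lemma mid_s (hpq : p ≤ q) (hq : q ≤ Λ.d lam) :
    Λ.s (Λ.mid lam p q) = Λ.mid lam q q := by
  have hsg : Λ.s (Λ.split lam p).1 = Λ.r (Λ.mid lam p q) := by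
    rw [mid, Λ.split_r _ (mid_le₂ Λ hpq hq)]
    exact (Λ.split_spec lam (mid_le₁ Λ hpq hq)).2.2.1
  rw [mid_refl Λ hq, split_split Λ hpq hq]
  show Λ.s (Λ.mid lam p q) = Λ.s (Λ.comp (Λ.split lam p).1 (Λ.mid lam p q))
  rw [Λ.s_comp _ _ hsg]

lemma mid_comp (hpq : p ≤ q) (hqt : q ≤ t) (ht : t ≤ Λ.d lam) :
    Λ.comp (Λ.mid lam p q) (Λ.mid lam q t) = Λ.mid lam p t := by
  have hq : q ≤ Λ.d lam := le_trans hqt ht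
  have hp : p ≤ Λ.d lam := le_trans hpq hq
  have hpt : p ≤ t := le_trans hpq hqt
  obtain ⟨a1, a2, a3, a4⟩ := Λ.split_spec lam hp
  obtain ⟨b1, b2, b3, b4⟩ := Λ.split_spec (Λ.split lam p).2 (mid_le₂ Λ hpq hq)
  obtain ⟨c1, c2, c3, c4⟩ := Λ.split_spec (Λ.split lam q).2 (mid_le₂ Λ hqt ht)
  have hβ : t - p ≤ Λ.d (Λ.split lam p).2 := mid_le₂ Λ hpt ht
  have hδ : (Λ.split lam q).2 = (Λ.split (Λ.split lam p).2 (q - p)).2 := by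
    rw [split_split Λ hpq hq]
  have hγε : Λ.s (Λ.mid lam p q) = Λ.r (Λ.mid lam q t) := by
    simp only [mid]
    rw [Λ.split_r _ (mid_le₂ Λ hqt ht), hδ]
    exact b3
  have hεζ : Λ.s (Λ.mid lam q t) =
      Λ.r (Λ.split (Λ.split lam q).2 (t - q)).2 := by
    simp only [mid]; exact c3
  have hfin : Λ.split (Λ.split lam p).2 (t - p) =
      (Λ.comp (Λ.mid lam p q) (Λ.mid lam q t),
        (Λ.split (Λ.split lam q).2 (t - q)).2) := by
    refine Λ.split_eq hβ ?_ ?_ ?_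
    · rw [Λ.d_comp _ _ hγε, mid_d Λ hpq hq, mid_d Λ hqt ht]
      funext i; simp only [Pi.add_apply, Pi.sub_apply]
      have h1 : p i ≤ q i := hpq i
      have h2 : q i ≤ t i := hqt i
      omega
    · rw [Λ.s_comp _ _ hγε]; exact hεζ
    · rw [Λ.comp_assoc _ _ _ hγε hεζ]
      have hc4 : Λ.comp (Λ.mid lam q t)
          (Λ.split (Λ.split lam q).2 (t - q)).2 = (Λ.split lam q).2 := by
        simp only [mid]; exact c4.symm
      rw [hc4, hδ]
      exact b4
  show Λ.comp (Λ.mid lam p q) (Λ.mid lam q t) =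
    (Λ.split (Λ.split lam p).2 (t - p)).1
  rw [hfin]

/-- Stability of `mid` under extending the ambient path. -/
lemma mid_ext {ρ : Λ.Path} (hpq : p ≤ q) (hq : q ≤ Λ.d lam)
    (hsr : Λ.s lam = Λ.r ρ) :
    Λ.mid (Λ.comp lam ρ) p q = Λ.mid lam p q := by
  have hp := mid_le₁ Λ hpq hq
  obtain ⟨a1, a2, a3, a4⟩ := Λ.split_spec lam hp
  obtain ⟨b1, b2, b3, b4⟩ := Λ.split_spec (Λ.split lam p).2 (mid_le₂ Λ hpq hq)
  have hsβρ : Λ.s (Λ.split lam p).2 = Λ.r ρ := by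
    rw [Λ.split_s lam hp]; exact hsr
  have hd' : p ≤ Λ.d (Λ.comp lam ρ) := by
    rw [Λ.d_comp _ _ hsr]; intro i
    show p i ≤ (Λ.d lam + Λ.d ρ) i
    have h1 : p i ≤ Λ.d lam i := hp i; simp only [Pi.add_apply]; omega
  have h1 : Λ.split (Λ.comp lam ρ) p =
      ((Λ.split lam p).1, Λ.comp (Λ.split lam p).2 ρ) := by
    refine Λ.split_eq hd' a1 ?_ ?_
    · rw [Λ.r_comp _ _ hsβρ]; exact a3
    · rw [← Λ.comp_assoc _ _ _ a3 hsβρ, ← a4]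
  have hle2 : q - p ≤ Λ.d (Λ.comp (Λ.split lam p).2 ρ) := by
    rw [Λ.d_comp _ _ hsβρ]
    intro i
    show (q - p) i ≤ (Λ.d (Λ.split lam p).2 + Λ.d ρ) i
    have h1 : (q - p) i ≤ Λ.d (Λ.split lam p).2 i := (mid_le₂ Λ hpq hq) i
    simp only [Pi.add_apply]; omega
  have hsδρ : Λ.s (Λ.split (Λ.split lam p).2 (q - p)).2 = Λ.r ρ := by
    rw [Λ.split_s _ (mid_le₂ Λ hpq hq)]; exact hsβρ
  have h2 : Λ.split (Λ.comp (Λ.split lam p).2 ρ) (q - p) =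
      (Λ.mid lam p q, Λ.comp (Λ.split (Λ.split lam p).2 (q - p)).2 ρ) := by
    refine Λ.split_eq hle2 ?_ ?_ ?_
    · exact b1
    · rw [Λ.r_comp _ _ hsδρ]; exact b3
    · show Λ.comp (Λ.split lam p).2 ρ = Λ.comp
        (Λ.split (Λ.split lam p).2 (q - p)).1
        (Λ.comp (Λ.split (Λ.split lam p).2 (q - p)).2 ρ)
      rw [← Λ.comp_assoc _ _ _ b3 hsδρ, ← b4]
  rw [mid, h1]
  show (Λ.split (Λ.comp (Λ.split lam p).2 ρ) (q - p)).1 = _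
  rw [h2]

end mid

/-- Greedy construction: every vertex receives a path in `Λ^{≤ n}`. -/
lemma exists_bounded (Λ : KGraph k) (v : Λ.Path) (hv : Λ.IsVertex v)
    (n : Fin k → ℕ) : ∃ lam, Λ.r lam = v ∧ lam ∈ Λ.boundedPaths n := by
  have key : ∀ t : ℕ, ∀ lam : Λ.Path, Λ.d lam ≤ n →
      (∑ i, (n i - Λ.d lam i)) ≤ t →
      ∃ ρ, Λ.r ρ = Λ.r lam ∧ ρ ∈ Λ.boundedPaths n := by
    intro t
    induction t with
    | zero =>
      intro lam hle hm
      refine ⟨lam, rfl, hle, fun i hi e hre hde => ?_⟩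
      have h0 : n i - Λ.d lam i = 0 :=
        (Finset.sum_eq_zero_iff.mp (Nat.le_zero.mp hm)) i (Finset.mem_univ i)
      omega
    | succ t ih =>
      intro lam hle hm
      by_cases hmem : lam ∈ Λ.boundedPaths n
      · exact ⟨lam, rfl, hmem⟩
      · rw [boundedPaths, Set.mem_setOf_eq] at hmem
        push_neg at hmem
        obtain ⟨i, hi, e, hre, hde⟩ := hmem hle
        have hse : Λ.s lam = Λ.r e := hre.symm
        have hdc : Λ.d (Λ.comp lam e) = Λ.d lam + Pi.single i 1 := by
          rw [Λ.d_comp _ _ hse, hde]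
        have hle' : Λ.d (Λ.comp lam e) ≤ n := by
          intro j
          show Λ.d (Λ.comp lam e) j ≤ n j
          rw [congrFun hdc j]
          simp only [Pi.add_apply]
          rcases eq_or_ne j i with rfl | hji
          · simp only [Pi.single_eq_same]; omega
          · simp only [Pi.single_eq_of_ne hji]
            have h1 : Λ.d lam j ≤ n j := hle j; omega
        have hsum : (∑ j, (n j - Λ.d (Λ.comp lam e) j)) <
            ∑ j, (n j - Λ.d lam j) := by
          apply Finset.sum_lt_sum
          · intro j _
            rw [congrFun hdc j]; simp only [Pi.add_apply]; omega
          · refine ⟨i, Finset.mem_univ i, ?_⟩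
            rw [congrFun hdc i]; simp only [Pi.add_apply, Pi.single_eq_same]
            omega
        obtain ⟨ρ, hρ1, hρ2⟩ := ih (Λ.comp lam e) hle' (by omega)
        exact ⟨ρ, by rw [hρ1, Λ.r_comp _ _ hse], hρ2⟩
  have hd0 : Λ.d v = 0 := by rw [← hv]; exact Λ.d_r v
  obtain ⟨ρ, h1, h2⟩ := key (∑ i, n i) v
    (by intro i; rw [hd0]; exact Nat.zero_le _)
    (le_of_eq (by simp [hd0]))
  exact ⟨ρ, by rw [h1, hv], h2⟩

/-- Forward propagation of "there is an edge of degree `e_i`" along paths of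
degree zero in coordinate `i`, in a locally convex graph. -/
lemma prop_noext (Λ : KGraph k) (hlc : Λ.LocallyConvex) (i : Fin k) :
    ∀ τ : Λ.Path, Λ.d τ i = 0 →
      (∀ e, Λ.r e = Λ.s τ → Λ.d e ≠ Pi.single i 1) →
      ∀ e, Λ.r e = Λ.r τ → Λ.d e ≠ Pi.single i 1 := by
  have key : ∀ t : ℕ, ∀ τ : Λ.Path, (∑ j, Λ.d τ j) ≤ t → Λ.d τ i = 0 →
      (∀ e, Λ.r e = Λ.s τ → Λ.d e ≠ Pi.single i 1) →
      ∀ e, Λ.r e = Λ.r τ → Λ.d e ≠ Pi.single i 1 := by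
    intro t
    induction t with
    | zero =>
      intro τ hm hdi hno e hre
      have h0 : Λ.d τ = 0 := by
        funext j
        have := (Finset.sum_eq_zero_iff.mp (Nat.le_zero.mp hm)) j
          (Finset.mem_univ j)
        simpa using this
      have : Λ.s τ = Λ.r τ := by
        rw [Λ.s_eq_of_d_eq_zero h0, Λ.eq_r_of_d_eq_zero h0]
      exact hno e (by rw [this]; exact hre)
    | succ t ih =>
      intro τ hm hdi hno e hre hde
      by_cases hpos : ∃ j, 0 < Λ.d τ j
      · obtain ⟨j, hj⟩ := hpos
        have hji : j ≠ i := by rintro rfl; omega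
        have hsj : Pi.single j 1 ≤ Λ.d τ := by
          intro l
          rcases eq_or_ne l j with rfl | hl
          · simp; omega
          · simp [Pi.single_eq_of_ne hl]
        obtain ⟨a1, a2, a3, a4⟩ := Λ.split_spec τ hsj
        set e₀ := (Λ.split τ (Pi.single j 1)).1
        set τ' := (Λ.split τ (Pi.single j 1)).2
        have hd' : Λ.d τ' i = 0 := by
          have := congrFun a2 i
          simp only [Pi.sub_apply] at this
          rw [this]; omega
        have hs' : Λ.s τ' = Λ.s τ := Λ.split_s τ hsj
        have hsum' : (∑ l, Λ.d τ' l) ≤ t := by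
          have hlt : (∑ l, Λ.d τ' l) < ∑ l, Λ.d τ l := by
            apply Finset.sum_lt_sum
            · intro l _
              have := congrFun a2 l
              simp only [Pi.sub_apply] at this
              omega
            · refine ⟨j, Finset.mem_univ j, ?_⟩
              have := congrFun a2 j
              simp only [Pi.sub_apply, Pi.single_eq_same] at this
              omega
          omega
        have hIH := ih τ' hsum' hd' (by rw [hs']; exact hno)
        -- apply local convexity at r τ with the j-edge e₀ and the i-edge e
        obtain ⟨lam', hl1, hl2⟩ := hlc j i (hji) e₀ e
          (by rw [Λ.split_r τ hsj, hre]) a1 hde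
        exact hIH lam' (by rw [hl1, a3]) hl2
      · push_neg at hpos
        have h0 : Λ.d τ = 0 := by funext j; simpa using Nat.le_zero.mp (hpos j)
        have : Λ.s τ = Λ.r τ := by
          rw [Λ.s_eq_of_d_eq_zero h0, Λ.eq_r_of_d_eq_zero h0]
        exact hno e (by rw [this]; exact hre) hde
  intro τ hdi hno
  exact key (∑ j, Λ.d τ j) τ le_rfl hdi hno

/-- A chosen element of `(r v)Λ^{≤ 𝟙}`. -/
noncomputable def nxt (Λ : KGraph k) (v : Λ.Path) : Λ.Path :=
  (Λ.exists_bounded (Λ.r v) (Λ.r_r v) 1).choose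

lemma nxt_spec (Λ : KGraph k) (v : Λ.Path) :
    Λ.r (Λ.nxt v) = Λ.r v ∧ Λ.nxt v ∈ Λ.boundedPaths 1 :=
  (Λ.exists_bounded (Λ.r v) (Λ.r_r v) 1).choose_spec

/-- The chain of compositions of `Λ^{≤𝟙}`-paths starting at `r w`. -/
noncomputable def chain (Λ : KGraph k) (w : Λ.Path) : ℕ → Λ.Path
  | 0 => Λ.r w
  | N + 1 => Λ.comp (Λ.chain w N) (Λ.nxt (Λ.s (Λ.chain w N)))

lemma chain_sr (Λ : KGraph k) (w : Λ.Path) (N : ℕ) :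
    Λ.s (Λ.chain w N) = Λ.r (Λ.nxt (Λ.s (Λ.chain w N))) := by
  rw [(Λ.nxt_spec _).1, Λ.r_s]

lemma chain_r (Λ : KGraph k) (w : Λ.Path) (N : ℕ) :
    Λ.r (Λ.chain w N) = Λ.r w := by
  induction N with
  | zero => exact Λ.r_r w
  | succ N ih => rw [chain, Λ.r_comp _ _ (Λ.chain_sr w N), ih]

lemma chain_d_succ (Λ : KGraph k) (w : Λ.Path) (N : ℕ) :
    Λ.d (Λ.chain w (N + 1)) =
      Λ.d (Λ.chain w N) + Λ.d (Λ.nxt (Λ.s (Λ.chain w N))) := by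
  rw [chain, Λ.d_comp _ _ (Λ.chain_sr w N)]

lemma chain_d_mono (Λ : KGraph k) (w : Λ.Path) {M N : ℕ} (h : M ≤ N) :
    Λ.d (Λ.chain w M) ≤ Λ.d (Λ.chain w N) := by
  induction N with
  | zero => rw [Nat.le_zero.mp h]
  | succ N ih =>
    rcases Nat.lt_or_ge M (N + 1) with h' | h'
    · refine le_trans (ih (Nat.lt_succ_iff.mp h')) ?_
      rw [chain_d_succ]
      intro j; simp only [Pi.add_apply]; omega
    · rw [Nat.le_antisymm h h']

lemma chain_mem (Λ : KGraph k) (w : Λ.Path) (N : ℕ) :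
    Λ.chain w N ∈ Λ.boundedPaths (fun _ => N) := by
  induction N with
  | zero =>
    simp only [boundedPaths, Set.mem_setOf_eq]
    constructor
    · intro j; simp [chain, Λ.d_r]
    · intro j hj; simp [chain, Λ.d_r] at hj
  | succ N ih =>
    simp only [boundedPaths, Set.mem_setOf_eq] at ih ⊢
    obtain ⟨ih1, ih2⟩ := ih
    obtain ⟨ρ, hρdef⟩ : ∃ ρ, ρ = Λ.nxt (Λ.s (Λ.chain w N)) := ⟨_, rfl⟩
    have hchain : Λ.chain w (N + 1) = Λ.comp (Λ.chain w N) ρ := by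
      rw [chain, hρdef]
    have hsr' : Λ.s (Λ.chain w N) = Λ.r ρ := by
      rw [hρdef]; exact Λ.chain_sr w N
    have hρ1 : Λ.r ρ = Λ.s (Λ.chain w N) := hsr'.symm
    have hdsucc : Λ.d (Λ.chain w (N + 1)) = Λ.d (Λ.chain w N) + Λ.d ρ := by
      rw [hchain, Λ.d_comp _ _ hsr']
    have hρm := (Λ.nxt_spec (Λ.s (Λ.chain w N))).2
    rw [← hρdef] at hρm
    simp only [boundedPaths, Set.mem_setOf_eq] at hρm
    obtain ⟨hρ2, hρ3⟩ := hρm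
    constructor
    · intro j
      show Λ.d (Λ.chain w (N + 1)) j ≤ N + 1
      have hd1 : Λ.d (Λ.chain w (N + 1)) j = Λ.d (Λ.chain w N) j + Λ.d ρ j := by
        rw [congrFun hdsucc j]; simp [Pi.add_apply]
      have h1 : Λ.d (Λ.chain w N) j ≤ N := ih1 j
      have h2 : Λ.d ρ j ≤ 1 := hρ2 j
      omega
    · intro j hj e hre hde
      have hjb : Λ.d (Λ.chain w (N + 1)) j < N + 1 := hj
      have hd1 : Λ.d (Λ.chain w (N + 1)) j = Λ.d (Λ.chain w N) j + Λ.d ρ j := by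
        rw [congrFun hdsucc j]; simp [Pi.add_apply]
      have hsc : Λ.s (Λ.chain w (N + 1)) = Λ.s ρ := by
        rw [hchain, Λ.s_comp _ _ hsr']
      rw [hsc] at hre
      rcases Nat.eq_zero_or_pos (Λ.d ρ j) with hz | hpos
      · exact hρ3 j (by show Λ.d ρ j < 1; omega) e hre hde
      · have hcj : Λ.d (Λ.chain w N) j < N := by omega
        have hsj : Pi.single j 1 ≤ Λ.d ρ := by
          intro l
          rcases eq_or_ne l j with rfl | hl
          · simp; omega
          · simp [Pi.single_eq_of_ne hl]
        obtain ⟨a1, a2, a3, a4⟩ := Λ.split_spec ρ hsj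
        exact absurd a1 (ih2 j hcj _ (by rw [Λ.split_r ρ hsj, hρ1]))

/-- The degree of the limit boundary path based at `r w`. -/
noncomputable def bdeg (Λ : KGraph k) (w : Λ.Path) : Fin k → ℕ∞ :=
  fun i => ⨆ N, (Λ.d (Λ.chain w N) i : ℕ∞)

lemma le_bdeg (Λ : KGraph k) (w : Λ.Path) (N : ℕ) (i : Fin k) :
    (Λ.d (Λ.chain w N) i : ℕ∞) ≤ Λ.bdeg w i :=
  le_iSup (fun N => ((Λ.d (Λ.chain w N) i : ℕ∞))) N

lemma exists_chain_le (Λ : KGraph k) (w : Λ.Path) {q : Fin k → ℕ}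
    (hq : ∀ i, (q i : ℕ∞) ≤ Λ.bdeg w i) : ∃ N, q ≤ Λ.d (Λ.chain w N) := by
  have h1 : ∀ i, ∃ N, q i ≤ Λ.d (Λ.chain w N) i := by
    intro i
    by_contra hc
    push_neg at hc
    have hle : Λ.bdeg w i ≤ ((q i - 1 : ℕ) : ℕ∞) := by
      refine iSup_le fun N => ?_
      exact Nat.cast_le.mpr (by have := hc N; omega)
    have h2 := le_trans (hq i) hle
    rw [Nat.cast_le] at h2
    have h3 := hc 0
    omega
  choose f hf using h1
  refine ⟨Finset.univ.sup f, fun i => ?_⟩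
  calc q i ≤ Λ.d (Λ.chain w (f i)) i := hf i
    _ ≤ Λ.d (Λ.chain w (Finset.univ.sup f)) i :=
        (Λ.chain_d_mono w (Finset.le_sup (Finset.mem_univ i))) i

open Classical in
/-- The segments of the limit boundary path. -/
noncomputable def bseg (Λ : KGraph k) (w : Λ.Path) (p q : Fin k → ℕ) :
    Λ.Path :=
  if h : p ≤ q ∧ ∀ i, (q i : ℕ∞) ≤ Λ.bdeg w i then
    Λ.mid (Λ.chain w (Λ.exists_chain_le w h.2).choose) p q
  else Λ.r w

lemma mid_chain_stable (Λ : KGraph k) (w : Λ.Path) {p q : Fin k → ℕ}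
    (hpq : p ≤ q) {N N' : ℕ} (hNN' : N ≤ N')
    (hq : q ≤ Λ.d (Λ.chain w N)) :
    Λ.mid (Λ.chain w N') p q = Λ.mid (Λ.chain w N) p q := by
  induction N' with
  | zero => rw [Nat.le_zero.mp hNN']
  | succ N' ih =>
    rcases Nat.lt_or_ge N (N' + 1) with h' | h'
    · have hN' := Nat.lt_succ_iff.mp h'
      rw [← ih hN']
      have hq' : q ≤ Λ.d (Λ.chain w N') :=
        le_trans hq (Λ.chain_d_mono w hN')
      conv_lhs => rw [chain]
      exact Λ.mid_ext hpq hq' (Λ.chain_sr w N')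
    · rw [Nat.le_antisymm hNN' h']

lemma bseg_eq (Λ : KGraph k) (w : Λ.Path) {p q : Fin k → ℕ} (hpq : p ≤ q)
    {N : ℕ} (hq : q ≤ Λ.d (Λ.chain w N)) :
    Λ.bseg w p q = Λ.mid (Λ.chain w N) p q := by
  have hdeg : ∀ i, (q i : ℕ∞) ≤ Λ.bdeg w i := fun i =>
    le_trans (Nat.cast_le.mpr (hq i)) (Λ.le_bdeg w N i)
  rw [bseg, dif_pos (And.intro hpq hdeg)]
  have hq₀ : q ≤ Λ.d (Λ.chain w
      ((Λ.exists_chain_le w (And.intro hpq hdeg).2).choose)) :=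
    (Λ.exists_chain_le w (And.intro hpq hdeg).2).choose_spec
  set N₀ := (Λ.exists_chain_le w (And.intro hpq hdeg).2).choose with hN₀
  calc Λ.mid (Λ.chain w N₀) p q
      = Λ.mid (Λ.chain w (max N N₀)) p q :=
        (Λ.mid_chain_stable w hpq (le_max_right _ _) hq₀).symm
    _ = Λ.mid (Λ.chain w N) p q :=
        Λ.mid_chain_stable w hpq (le_max_left _ _) hq

/-- The boundary path generated from the vertex `r w`. -/
noncomputable def bp (Λ : KGraph k) (hlc : Λ.LocallyConvex) (w : Λ.Path) :
    BoundaryPath Λ where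
  deg := Λ.bdeg w
  seg := Λ.bseg w
  seg_d := by
    intro p q hpq hq
    obtain ⟨N, hN⟩ := Λ.exists_chain_le w hq
    rw [Λ.bseg_eq w hpq hN]
    exact Λ.mid_d hpq hN
  seg_r := by
    intro p q hpq hq
    obtain ⟨N, hN⟩ := Λ.exists_chain_le w hq
    have hp : p ≤ Λ.d (Λ.chain w N) := le_trans hpq hN
    rw [Λ.bseg_eq w hpq hN, Λ.bseg_eq w (le_refl p) hp]
    exact Λ.mid_r hpq hN
  seg_s := by
    intro p q hpq hq
    obtain ⟨N, hN⟩ := Λ.exists_chain_le w hq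
    rw [Λ.bseg_eq w hpq hN, Λ.bseg_eq w (le_refl q) hN]
    exact Λ.mid_s hpq hN
  seg_comp := by
    intro p q t hpq hqt ht
    obtain ⟨N, hN⟩ := Λ.exists_chain_le w ht
    have hqN : q ≤ Λ.d (Λ.chain w N) := le_trans hqt hN
    rw [Λ.bseg_eq w hpq hqN, Λ.bseg_eq w hqt hN,
      Λ.bseg_eq w (le_trans hpq hqt) hN]
    exact Λ.mid_comp hpq hqt hN
  boundary := by
    intro p hp i hpi e hre
    obtain ⟨N₀, hN₀⟩ := Λ.exists_chain_le w hp
    obtain ⟨N, hN1, hN2⟩ : ∃ N, N₀ ≤ N ∧ p i + 1 ≤ N :=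
      ⟨max N₀ (p i + 1), le_max_left _ _, le_max_right _ _⟩
    have hpN : p ≤ Λ.d (Λ.chain w N) :=
      le_trans hN₀ (Λ.chain_d_mono w hN1)
    have hdi : Λ.d (Λ.chain w N) i = p i := by
      have hle : (Λ.d (Λ.chain w N) i : ℕ∞) ≤ Λ.bdeg w i := Λ.le_bdeg w N i
      rw [← hpi] at hle
      have h1 : Λ.d (Λ.chain w N) i ≤ p i := by exact_mod_cast hle
      have h2 : p i ≤ Λ.d (Λ.chain w N) i := hpN i
      omega
    have hmem := Λ.chain_mem w N
    simp only [boundedPaths, Set.mem_setOf_eq] at hmem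
    have hnoi : ∀ e', Λ.r e' = Λ.s (Λ.chain w N) →
        Λ.d e' ≠ Pi.single i 1 := by
      refine hmem.2 i ?_
      show Λ.d (Λ.chain w N) i < N
      omega
    obtain ⟨a1, a2, a3, a4⟩ := Λ.split_spec (Λ.chain w N) hpN
    have hτi : Λ.d (Λ.split (Λ.chain w N) p).2 i = 0 := by
      have h3 := congrFun a2 i
      simp only [Pi.sub_apply] at h3
      omega
    have hτs : Λ.s (Λ.split (Λ.chain w N) p).2 = Λ.s (Λ.chain w N) :=
      Λ.split_s _ hpN
    have hprop := Λ.prop_noext hlc i (Λ.split (Λ.chain w N) p).2 hτi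
      (by rw [hτs]; exact hnoi)
    have hbseg : Λ.bseg w p p = Λ.r (Λ.split (Λ.chain w N) p).2 := by
      rw [Λ.bseg_eq w (le_refl p) hpN, mid_refl Λ hpN]
      exact a3
    rw [hbseg] at hre
    exact hprop e hre

end KGraph

/-- from the proof of the Corollary in Section 5: If a
locally convex row-finite `k`-graph `Λ` is cofinal, then `Λ^0` is a maximal
tail in `Λ`. -/
theorem statement13 {k : ℕ} (Λ : KGraph k) (hlc : Λ.LocallyConvex)
    (hrf : Λ.RowFinite) (hcof : Λ.Cofinal) :
    Λ.IsMaximalTail {v | Λ.IsVertex v} := by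
  refine ⟨?_, fun v hv => hv, ?_, ?_, ?_⟩
  · obtain ⟨μ⟩ := Λ.nonempty_path
    exact ⟨Λ.r μ, Λ.r_r μ⟩
  · intro lam _
    exact Λ.r_r lam
  · intro v hv n
    obtain ⟨lam, h1, h2⟩ := Λ.exists_bounded v hv n
    exact ⟨lam, h2, h1, Λ.r_s lam⟩
  · intro v hv w hw
    have hw' : Λ.r w = w := hw
    have hx0 : (Λ.bp hlc w).seg 0 0 = w := by
      show Λ.bseg w 0 0 = w
      have h0 : (0 : Fin k → ℕ) ≤ Λ.d (Λ.chain w 0) := fun i => Nat.zero_le _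
      rw [Λ.bseg_eq w (le_refl 0) h0, KGraph.mid_refl Λ h0]
      have hsp : Λ.split (Λ.chain w 0) 0 = (Λ.r (Λ.chain w 0), Λ.chain w 0) :=
        Λ.split_eq h0 (Λ.d_r _) (Λ.s_r _) (Λ.id_comp _).symm
      rw [hsp]
      show Λ.s (Λ.r (Λ.chain w 0)) = w
      rw [Λ.s_r]
      show Λ.r (Λ.r w) = w
      rw [Λ.r_r, hw']
    obtain ⟨n, hn, μ, hμr, hμs⟩ := hcof (Λ.bp hlc w) v hv
    refine ⟨μ, (Λ.bp hlc w).seg 0 n, hμr, ?_, ?_⟩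
    · rw [(Λ.bp hlc w).seg_r 0 n (fun i => Nat.zero_le _) hn, hx0]
    · rw [(Λ.bp hlc w).seg_s 0 n (fun i => Nat.zero_le _) hn]
      exact hμs
end

section
/- Let Λ be a locally convex row-finite k-graph and let H₁ ⊇ H₂ be saturated hereditary subsets of Λ^0. Then Δ(H₁,H₂) := {v ∈ H₁ : T(v) ∩ H₂ = ∅} is a hereditary subset of Λ^0 with Δ(H₁,H₂) ∩ H₂ = ∅, and moreover Σ(Δ(H₁,H₂)) ∩ H₂ = ∅. -/
/-- Every vertex receives a path in `Λ^{≤ n}` for every `n`. -/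
lemma exists_boundedPath {k : ℕ} (Λ : KGraph k) (v : Λ.Path)
    (hv : Λ.IsVertex v) (n : Fin k → ℕ) :
    ∃ lam ∈ Λ.boundedPaths n, Λ.r lam = v := by
  have key : ∀ N : ℕ, ∀ lam : Λ.Path, Λ.r lam = v → Λ.d lam ≤ n →
      (∑ i, (n i - Λ.d lam i)) ≤ N → ∃ μ ∈ Λ.boundedPaths n, Λ.r μ = v := by
    intro N
    induction N with
    | zero =>
      intro lam hr hd hsum
      refine ⟨lam, ⟨hd, ?_⟩, hr⟩
      intro i hi
      exfalso
      have h0 : ∑ i, (n i - Λ.d lam i) = 0 := Nat.le_zero.mp hsum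
      have := Finset.sum_eq_zero_iff.mp h0 i (Finset.mem_univ i)
      omega
    | succ N ih =>
      intro lam hr hd hsum
      by_cases hmem : lam ∈ Λ.boundedPaths n
      · exact ⟨lam, hmem, hr⟩
      · simp only [KGraph.boundedPaths, Set.mem_setOf_eq] at hmem
        push_neg at hmem
        obtain ⟨i, hi, e, her, hed⟩ := hmem hd
        have hs : Λ.s lam = Λ.r e := her.symm
        have hdc : Λ.d (Λ.comp lam e) = Λ.d lam + Λ.d e := Λ.d_comp lam e hs
        have hrc : Λ.r (Λ.comp lam e) = Λ.r lam := Λ.r_comp lam e hs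
        have hd' : Λ.d (Λ.comp lam e) ≤ n := by
          intro j
          rw [hdc, hed]
          by_cases hji : j = i
          · subst hji; simp [Pi.single]; omega
          · simp [Pi.single, hji]; exact hd j
        have hsum' : ∑ j, (n j - Λ.d (Λ.comp lam e) j) ≤ N := by
          have hlt : ∑ j, (n j - Λ.d (Λ.comp lam e) j)
              < ∑ j, (n j - Λ.d lam j) := by
            apply Finset.sum_lt_sum
            · intro j _
              rw [hdc, hed]
              by_cases hji : j = i
              · subst hji; simp [Pi.single]; omega
              · simp [Pi.single, hji]
            · refine ⟨i, Finset.mem_univ i, ?_⟩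
              rw [hdc, hed]
              simp [Pi.single]
              omega
          omega
        exact ih (Λ.comp lam e) (hrc.trans hr) hd' hsum'
  have hdv : Λ.d v = 0 := by rw [← hv]; exact Λ.d_r v
  exact key (∑ i, (n i - Λ.d v i)) v hv
    (by intro i; rw [hdv]; exact Nat.zero_le _) le_rfl

/-- Definition 6.5 remark: Let `Λ` be a locally convex
row-finite `k`-graph and `H₁ ⊇ H₂` saturated hereditary subsets of `Λ^0`.
Then `Δ(H₁,H₂)` is hereditary, `Δ(H₁,H₂) ∩ H₂ = ∅` and
`Σ(Δ(H₁,H₂)) ∩ H₂ = ∅`. -/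
theorem statement16 {k : ℕ} (Λ : KGraph k) (hlc : Λ.LocallyConvex)
    (hrf : Λ.RowFinite) (H₁ H₂ : Set Λ.Path)
    (h1v : ∀ v ∈ H₁, Λ.IsVertex v) (h2v : ∀ v ∈ H₂, Λ.IsVertex v)
    (h21 : H₂ ⊆ H₁) (h1her : Λ.Hereditary H₁) (h1sat : Λ.Saturated H₁)
    (h2her : Λ.Hereditary H₂) (h2sat : Λ.Saturated H₂) :
    Λ.Hereditary (Λ.Delta H₁ H₂) ∧
    Λ.Delta H₁ H₂ ∩ H₂ = ∅ ∧
    Λ.SatClosure (Λ.Delta H₁ H₂) ∩ H₂ = ∅ := by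
  have hDelta2 : Λ.Delta H₁ H₂ ∩ H₂ = ∅ := by
    apply Set.eq_empty_iff_forall_notMem.mpr
    rintro v ⟨⟨hv1, htree⟩, hv2⟩
    have hvert : Λ.IsVertex v := h2v v hv2
    have hsv : Λ.s v = v := by
      conv_lhs => rw [← hvert]
      rw [Λ.s_r, hvert]
    have : v ∈ Λ.tree v ∩ H₂ := ⟨⟨v, hvert, hsv⟩, hv2⟩
    rw [htree] at this
    exact this
  refine ⟨?_, hDelta2, ?_⟩
  · rintro lam ⟨h1, htree⟩
    refine ⟨h1her lam h1, ?_⟩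
    apply Set.eq_empty_iff_forall_notMem.mpr
    rintro w ⟨⟨μ, hrμ, hsμ⟩, hw2⟩
    have hs : Λ.s lam = Λ.r μ := hrμ.symm
    have : w ∈ Λ.tree (Λ.r lam) ∩ H₂ :=
      ⟨⟨Λ.comp lam μ, Λ.r_comp lam μ hs, (Λ.s_comp lam μ hs).trans hsμ⟩, hw2⟩
    rw [htree] at this
    exact this
  · -- H₂ᶜ is saturated and contains Δ, so Σ(Δ) ⊆ H₂ᶜ
    have hsatc : Λ.Saturated H₂ᶜ := by
      intro v hvert ⟨n, hn⟩
      intro hv2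
      obtain ⟨lam, hmem, hr⟩ := exists_boundedPath Λ v hvert n
      have : Λ.s lam ∈ H₂ := h2her lam (hr ▸ hv2)
      exact hn lam hmem hr this
    have hsub : Λ.SatClosure (Λ.Delta H₁ H₂) ⊆ H₂ᶜ := by
      intro v hv
      exact hv H₂ᶜ ⟨fun w hw hw2 =>
        Set.eq_empty_iff_forall_notMem.mp hDelta2 w ⟨hw, hw2⟩, hsatc⟩
    apply Set.eq_empty_iff_forall_notMem.mpr
    rintro v ⟨hvσ, hv2⟩
    exact hsub hvσ hv2
end
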